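/- Location of the zeros of the squared Gauss map at 3-division points: let τ ∈ ℂ with Im τ > 0. (i) For every pair of integers k, m one has θ₁(3·(k/3 + m·τ) − τ; 3τ) ≠ 0. (ii) For every z ∈ ℂ with θ₁(3z − τ; 3τ) ≠ 0, one has G²(z) = 0 if and only if there exist integers k, m with z = k/3 + m·τ. -/

import Mathlib

open Complex

/-- The Jacobi theta function θ₁(z;τ), defined via Mathlib's `jacobiTheta₂` by
θ₁(z;τ) = −i·exp(iπτ/4 + iπz)·jacobiTheta₂(z + (1+τ)/2, τ). -/
noncomputable def theta1 (z τ : ℂ) : ℂ :=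
  -I * Complex.exp (I * (Real.pi : ℂ) * τ / 4 + I * (Real.pi : ℂ) * z) *
    jacobiTheta₂ (z + (1 + τ) / 2) τ

/-- The squared Gauss map of the gyrating H'-T surface:
G²(z) = −exp(iπτ/3)·exp(2πi z)·θ₁(3z; 3τ) / θ₁(3z − τ; 3τ). -/
noncomputable def Gsq (τ z : ℂ) : ℂ :=
  -Complex.exp (I * (Real.pi : ℂ) * τ / 3) * Complex.exp (2 * (Real.pi : ℂ) * I * z) *
    theta1 (3 * z) (3 * τ) / theta1 (3 * z - τ) (3 * τ)

noncomputable section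

local notation "π" => (Real.pi : ℂ)

/-- quasi-periodicity of θ₂ under z ↦ z + k + mτ. -/
lemma jt2_add_lattice (k m : ℤ) (z τ : ℂ) :
    jacobiTheta₂ (z + k + m * τ) τ =
      Complex.exp (-π * I * m ^ 2 * τ - 2 * π * I * m * z) * jacobiTheta₂ z τ := by
  rw [jacobiTheta₂, jacobiTheta₂, ← tsum_mul_left, ← (Equiv.subRight (m : ℤ)).tsum_eq]
  refine tsum_congr fun n => ?_
  simp only [Equiv.subRight_apply, jacobiTheta₂_term]
  rw [← Complex.exp_add]
  have h1 : 2 * π * I * (↑(n - m) : ℂ) * (z + k + m * τ) + π * I * (↑(n - m) : ℂ) ^ 2 * τ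
      = ((n - m) * k : ℤ) * (2 * π * I) +
        (-π * I * m ^ 2 * τ - 2 * π * I * m * z + (2 * π * I * n * z + π * I * n ^ 2 * τ)) := by
    push_cast
    ring
  rw [h1, Complex.exp_add, Complex.exp_int_mul_two_pi_mul_I, one_mul]

/-- shift of τ by an integer. -/
lemma jt2_tau_add_int (k : ℤ) (z τ : ℂ) :
    jacobiTheta₂ z (τ + k) = jacobiTheta₂ (z + k / 2) τ := by
  refine tsum_congr fun n => ?_
  simp only [jacobiTheta₂_term]
  have h1 : 2 * π * I * (n : ℂ) * z + π * I * (n : ℂ) ^ 2 * (τ + k)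
      = ((n - 1) * n * k : ℤ) / 2 * (2 * π * I) +
        (2 * π * I * n * (z + k / 2) + π * I * n ^ 2 * τ) := by
    push_cast
    ring
  have h2 : ∃ j : ℤ, (n - 1) * n * k = 2 * j := by
    obtain ⟨j, hj⟩ := Int.even_mul_succ_self (n - 1)
    exact ⟨j * k, by rw [sub_add_cancel] at hj; rw [hj]; ring⟩
  obtain ⟨j, hj⟩ := h2
  rw [h1, hj, Complex.exp_add]
  have : ((2 * j : ℤ) : ℂ) / 2 = (j : ℤ) := by push_cast; ring
  rw [this, Complex.exp_int_mul_two_pi_mul_I, one_mul]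

/-- θ₂ vanishes at the half-period. -/
lemma jt2_halfperiod (τ : ℂ) : jacobiTheta₂ ((1 + τ) / 2) τ = 0 := by
  have key : ∀ n : ℤ, jacobiTheta₂_term (-n - 1) ((1 + τ) / 2) τ
      = - jacobiTheta₂_term n ((1 + τ) / 2) τ := by
    intro n
    simp only [jacobiTheta₂_term]
    have h1 : 2 * π * I * ((-n - 1 : ℤ) : ℂ) * ((1 + τ) / 2) + π * I * ((-n - 1 : ℤ) : ℂ) ^ 2 * τ
        = (-n - 1 : ℤ) * (2 * π * I) + (π * I +
          (2 * π * I * n * ((1 + τ) / 2) + π * I * n ^ 2 * τ)) := by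
      push_cast; ring
    rw [h1, Complex.exp_add, Complex.exp_int_mul_two_pi_mul_I, one_mul, Complex.exp_add,
      Complex.exp_pi_mul_I, neg_one_mul]
  have e : ℤ ≃ ℤ := (Equiv.neg ℤ).trans (Equiv.subRight 1)
  have h := ((Equiv.neg ℤ).trans (Equiv.subRight 1)).tsum_eq
    (fun n => jacobiTheta₂_term n ((1 + τ) / 2) τ)
  simp only [Equiv.trans_apply, Equiv.neg_apply, Equiv.subRight_apply] at h
  have h2 : jacobiTheta₂ ((1 + τ) / 2) τ = - jacobiTheta₂ ((1 + τ) / 2) τ := by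
    conv_lhs => rw [jacobiTheta₂, ← h]
    rw [jacobiTheta₂, ← tsum_neg]
    exact tsum_congr fun n => key n
  have h3 : 2 * jacobiTheta₂ ((1 + τ) / 2) τ = 0 := by linear_combination h2
  simpa using h3

lemma norm_exp_pi_I_mul (ζ : ℂ) : ‖Complex.exp (π * I * ζ)‖ = Real.exp (-Real.pi * ζ.im) := by
  rw [Complex.norm_exp]
  congr 1
  simp [Complex.mul_re, Complex.mul_im]

lemma exp_neg_pi_lt : Real.exp (-(4/5 * Real.pi)) ≤ 1/9 := by
  rw [Real.exp_neg, inv_le_comm₀ (Real.exp_pos _) (by norm_num)]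
  norm_num
  have h1 : (2.5 : ℝ) ≤ 4/5 * Real.pi := by nlinarith [Real.pi_gt_d6]
  have h2 : (9 : ℝ) ≤ Real.exp 2.5 := by
    have : Real.exp 2.5 = Real.exp 1 * Real.exp 1 * Real.exp 0.5 := by
      rw [← Real.exp_add, ← Real.exp_add]; norm_num
    nlinarith [Real.exp_one_gt_d9, Real.add_one_le_exp (0.5 : ℝ),
      Real.exp_pos (0.5 : ℝ), Real.exp_pos (1 : ℝ)]
  nlinarith [Real.exp_le_exp.mpr h1, Real.exp_pos (4/5 * Real.pi)]

lemma jt2_ne_zero_of_reduced {τ w : ℂ} (ht : 4/5 ≤ τ.im)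
    (hre : |w.re| ≤ 1/2) (him : |w.im| ≤ τ.im / 2) (hw : w ≠ 0) :
    jacobiTheta₂ ((1 + τ) / 2 + w) τ ≠ 0 := by
  have hτ : 0 < τ.im := by linarith
  set z : ℂ := (1 + τ) / 2 + w with hz
  set f : ℤ → ℂ := fun n => jacobiTheta₂_term n z τ with hf
  have hsum : Summable f := (hasSum_jacobiTheta₂_term z hτ).summable
  have h1 : Summable fun n : ℕ => f n := hsum.comp_injective Nat.cast_injective
  have h2 : Summable fun n : ℕ => f (-(n+1)) :=
    hsum.comp_injective (fun a b hab => by omega)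
  set x : ℂ := Complex.exp (-(2 * π * I * w)) with hxdef
  have hx : x ≠ 1 := by
    intro hx1
    obtain ⟨n, hn⟩ := Complex.exp_eq_one_iff.mp hx1
    have hwn : w = -n := by
      have h2pi : (2 * π * I) ≠ 0 := Complex.two_pi_I_ne_zero
      have hzz : (2 * π * I) * (w + n) = 0 := by
        have hn' : -(2 * π * I * w) = n * (2 * Real.pi * I) := hn
        linear_combination -hn'
      rcases mul_eq_zero.mp hzz with h | h
      · exact absurd h h2pi
      · linear_combination h
    have habs : |(-(n : ℝ))| ≤ 1/2 := by
      have hre' : w.re = -(n : ℝ) := by rw [hwn]; simp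
      rw [← hre']; exact hre
    have hn0 : n = 0 := by
      by_contra h
      have h1abs : (1 : ℝ) ≤ |(n : ℝ)| := by
        rw [← Int.cast_abs]
        exact_mod_cast Int.one_le_abs h
      rw [abs_neg] at habs; linarith
    apply hw; rw [hwn, hn0]; simp
  have hx' : (1 : ℂ) - x ≠ 0 := sub_ne_zero_of_ne (Ne.symm hx)
  set g : ℕ → ℂ := fun n =>
    Complex.exp (π * I * ((n : ℂ) + ((n : ℂ)^2 + n) * τ)) *
      ∑ k ∈ Finset.range (2*n+1), Complex.exp (2 * π * I * ((n : ℂ) - k) * w) with hgdef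
  have key : ∀ n : ℕ, f n + f (-(n+1)) = (1 - x) * g n := by
    intro n
    have hs : ∑ k ∈ Finset.range (2*n+1), Complex.exp (2 * π * I * ((n : ℂ) - k) * w)
        = Complex.exp (2 * π * I * n * w) * ∑ k ∈ Finset.range (2*n+1), x ^ k := by
      rw [Finset.mul_sum]
      refine Finset.sum_congr rfl fun k _ => ?_
      rw [hxdef, ← Complex.exp_nat_mul, ← Complex.exp_add]
      congr 1; push_cast; ring
    have hgeo : (1 - x) * ∑ k ∈ Finset.range (2*n+1), x ^ k = 1 - x ^ (2*n+1) := by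
      linear_combination (-1 : ℂ) * geom_sum_mul x (2*n+1)
    have hxpow : x ^ (2*n+1) = Complex.exp (((2*n+1 : ℕ) : ℂ) * (-(2 * π * I * w))) := by
      rw [Complex.exp_nat_mul]
    have hodd : Complex.exp (((2*n+1 : ℕ) : ℂ) * (-(π * I))) = -1 := by
      rw [Complex.exp_nat_mul, Complex.exp_neg, Complex.exp_pi_mul_I]
      rw [show ((-1 : ℂ))⁻¹ = -1 by norm_num, Odd.neg_one_pow ⟨n, by ring⟩]
    have expand : (1 - x) * g n
        = Complex.exp (π * I * ((n : ℂ) + ((n : ℂ)^2 + n) * τ)) * Complex.exp (2 * π * I * n * w)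
          - Complex.exp (π * I * ((n : ℂ) + ((n : ℂ)^2 + n) * τ)) * Complex.exp (2 * π * I * n * w)
            * x ^ (2*n+1) := by
      rw [hgdef]; dsimp only; rw [hs]
      calc (1-x) * (Complex.exp (π * I * ((n : ℂ) + ((n : ℂ)^2 + n) * τ)) *
              (Complex.exp (2 * π * I * n * w) * ∑ k ∈ Finset.range (2*n+1), x ^ k))
          = Complex.exp (π * I * ((n : ℂ) + ((n : ℂ)^2 + n) * τ)) *
              Complex.exp (2 * π * I * n * w) *
              ((1 - x) * ∑ k ∈ Finset.range (2*n+1), x ^ k) := by ring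
        _ = _ := by rw [hgeo]; ring
    rw [expand, hxpow]
    have e1 : Complex.exp (π * I * ((n : ℂ) + ((n : ℂ)^2 + n) * τ))
          * Complex.exp (2 * π * I * n * w) = f n := by
      rw [hf]; dsimp only [jacobiTheta₂_term]
      rw [← Complex.exp_add, hz]
      congr 1; push_cast; ring
    have e2 : Complex.exp (π * I * ((n : ℂ) + ((n : ℂ)^2 + n) * τ))
          * Complex.exp (2 * π * I * n * w)
          * Complex.exp (((2*n+1 : ℕ) : ℂ) * (-(2 * π * I * w))) = - f (-(n+1)) := by
      have hfe : f (-(n+1)) = Complex.exp (((2*n+1 : ℕ) : ℂ) * (-(π * I)))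
          * (Complex.exp (π * I * ((n : ℂ) + ((n : ℂ)^2 + n) * τ))
            * Complex.exp (2 * π * I * n * w)
            * Complex.exp (((2*n+1 : ℕ) : ℂ) * (-(2 * π * I * w)))) := by
        rw [hf]; dsimp only [jacobiTheta₂_term]
        rw [← Complex.exp_add, ← Complex.exp_add, ← Complex.exp_add, hz]
        congr 1; push_cast; ring
      rw [hfe, hodd]; ring
    rw [e2, e1]; ring
  have hrep : jacobiTheta₂ z τ = (1 - x) * ∑' n : ℕ, g n := by
    have e0 : jacobiTheta₂ z τ = ∑' n : ℤ, f n := rfl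
    rw [e0, tsum_of_nat_of_neg_add_one h1 h2, ← Summable.tsum_add h1 h2, tsum_congr key, tsum_mul_left]
  have hgsum : Summable g := by
    have hsum2 : Summable (fun n : ℕ => (1 - x) * g n) := by
      have h12 := h1.add h2
      rwa [funext key] at h12
    exact (summable_mul_left_iff hx').mp hsum2
  have hb : ∀ n : ℕ, ‖g (n+1)‖ ≤ (1/3 : ℝ)^(n+1) := by
    intro n
    set m : ℕ := n + 1 with hm
    have hm1 : (1 : ℝ) ≤ (m : ℝ) := by exact_mod_cast Nat.one_le_iff_ne_zero.mpr (by omega)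
    have hnorm1 : ‖Complex.exp (π * I * ((m : ℂ) + ((m : ℂ)^2 + m) * τ))‖
        = Real.exp (-Real.pi * (((m:ℝ)^2 + m) * τ.im)) := by
      rw [norm_exp_pi_I_mul]
      congr 2
      have hmc : ((m : ℂ) + ((m : ℂ)^2 + m) * τ) = (((m:ℝ)^2 + m : ℝ) : ℂ) * τ + ((m:ℝ) : ℂ) := by
        push_cast; ring
      rw [hmc, Complex.add_im, Complex.im_ofReal_mul, Complex.ofReal_im, add_zero]
    have hterm : ∀ k ∈ Finset.range (2*m+1),
        ‖Complex.exp (2 * π * I * ((m : ℂ) - k) * w)‖ ≤ Real.exp (Real.pi * m * τ.im) := by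
      intro k hk
      have hrw : (2 * π * I * ((m : ℂ) - k) * w) = π * I * (2 * ((m : ℂ) - k) * w) := by ring
      rw [hrw, norm_exp_pi_I_mul]
      apply Real.exp_le_exp.mpr
      have him2 : (2 * ((m : ℂ) - (k:ℂ)) * w).im = 2 * ((m:ℝ) - k) * w.im := by
        simp [Complex.mul_im, Complex.sub_re, Complex.sub_im]
      rw [him2]
      have hk' : (k : ℝ) ≤ 2*m := by
        exact_mod_cast Nat.lt_succ_iff.mp (Finset.mem_range.mp hk)
      have hmk : |(m:ℝ) - k| ≤ (m:ℝ) := by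
        rw [abs_le]; constructor <;> nlinarith [Nat.cast_nonneg (α := ℝ) k]
      have habs : |2 * ((m:ℝ) - k) * w.im| ≤ 2 * m * (τ.im/2) := by
        rw [abs_mul, abs_mul, _root_.abs_two]
        have h0m : (0:ℝ) ≤ (m:ℝ) := by positivity
        have := abs_nonneg w.im
        nlinarith [abs_nonneg ((m:ℝ) - k)]
      have := abs_le.mp habs
      nlinarith [Real.pi_pos]
    have hgb : ‖g m‖ ≤ (2*(m:ℝ)+1) * Real.exp (-Real.pi * (m:ℝ)^2 * τ.im) := by
      rw [hgdef]
      dsimp only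
      rw [norm_mul, hnorm1]
      have hsb : ‖∑ k ∈ Finset.range (2*m+1), Complex.exp (2 * π * I * ((m : ℂ) - k) * w)‖
          ≤ (2*(m:ℝ)+1) * Real.exp (Real.pi * m * τ.im) := by
        calc ‖∑ k ∈ Finset.range (2*m+1), Complex.exp (2 * π * I * ((m : ℂ) - k) * w)‖
            ≤ ∑ k ∈ Finset.range (2*m+1), ‖Complex.exp (2 * π * I * ((m : ℂ) - k) * w)‖ :=
              norm_sum_le _ _
          _ ≤ ∑ _k ∈ Finset.range (2*m+1), Real.exp (Real.pi * m * τ.im) :=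
              Finset.sum_le_sum hterm
          _ = (2*(m:ℝ)+1) * Real.exp (Real.pi * m * τ.im) := by
              rw [Finset.sum_const, Finset.card_range]; push_cast; ring
      calc Real.exp (-Real.pi * (((m:ℝ)^2 + m) * τ.im)) *
            ‖∑ k ∈ Finset.range (2*m+1), Complex.exp (2 * π * I * ((m : ℂ) - k) * w)‖
          ≤ Real.exp (-Real.pi * (((m:ℝ)^2 + m) * τ.im)) *
            ((2*(m:ℝ)+1) * Real.exp (Real.pi * m * τ.im)) := by
            exact mul_le_mul_of_nonneg_left hsb (Real.exp_nonneg _)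
        _ = (2*(m:ℝ)+1) * Real.exp (-Real.pi * (m:ℝ)^2 * τ.im) := by
            rw [show Real.exp (-Real.pi * (((m:ℝ)^2 + m) * τ.im)) *
                ((2*(m:ℝ)+1) * Real.exp (Real.pi * m * τ.im))
                = (2*(m:ℝ)+1) * (Real.exp (-Real.pi * (((m:ℝ)^2 + m) * τ.im)) *
                  Real.exp (Real.pi * m * τ.im)) from by ring, ← Real.exp_add]
            congr 1; ring
    have h3m : (2*(m:ℝ)+1) ≤ 3^m := by
      clear_value m
      clear hm hm1 hnorm1 hterm hgb
      induction m with
      | zero => norm_num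
      | succ j ih =>
        push_cast at ih ⊢
        have h3j : (1:ℝ) ≤ 3^j := one_le_pow₀ (by norm_num)
        rw [pow_succ]
        nlinarith
    have hexp : Real.exp (-Real.pi * (m:ℝ)^2 * τ.im) ≤ (1/9 : ℝ)^m := by
      have step1 : Real.exp (-Real.pi * (m:ℝ)^2 * τ.im)
          ≤ Real.exp ((m:ℝ) * (-(4/5 * Real.pi))) := by
        apply Real.exp_le_exp.mpr
        have hmm : (m:ℝ) * (4/5) ≤ (m:ℝ)^2 * τ.im := by nlinarith [sq_nonneg ((m:ℝ) - 1)]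
        nlinarith [mul_le_mul_of_nonneg_left hmm Real.pi_pos.le]
      have step2 : Real.exp ((m:ℝ) * (-(4/5 * Real.pi))) = (Real.exp (-(4/5 * Real.pi)))^m := by
        rw [← Real.exp_nat_mul]
      have step3 : (Real.exp (-(4/5 * Real.pi)))^m ≤ (1/9 : ℝ)^m :=
        pow_le_pow_left₀ (Real.exp_nonneg _) exp_neg_pi_lt m
      calc Real.exp (-Real.pi * (m:ℝ)^2 * τ.im) ≤ _ := step1
        _ = _ := step2
        _ ≤ _ := step3
    calc ‖g m‖ ≤ (2*(m:ℝ)+1) * Real.exp (-Real.pi * (m:ℝ)^2 * τ.im) := hgb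
      _ ≤ 3^m * (1/9 : ℝ)^m := by
          apply mul_le_mul h3m hexp (Real.exp_nonneg _) (by positivity)
      _ = (1/3 : ℝ)^m := by
          rw [← mul_pow]; norm_num
  have hs3 : Summable (fun n : ℕ => (1/3 : ℝ)^(n+1)) := by
    have : Summable (fun n : ℕ => (1/3 : ℝ) * (1/3)^n) :=
      (summable_geometric_of_lt_one (by norm_num) (by norm_num)).mul_left _
    convert this using 2 with n
    ring
  have hnorm_tail : ‖∑' n : ℕ, g (n+1)‖ ≤ 1/2 := by
    calc ‖∑' n : ℕ, g (n+1)‖ ≤ ∑' n : ℕ, (1/3 : ℝ)^(n+1) := by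
          apply tsum_of_norm_bounded hs3.hasSum hb
      _ = (1/3) * ∑' n : ℕ, (1/3 : ℝ)^n := by
          rw [← tsum_mul_left]
          exact tsum_congr fun n => by ring
      _ = 1/2 := by
          rw [tsum_geometric_of_lt_one (by norm_num) (by norm_num)]; norm_num
  have hfinal : (1:ℝ)/2 ≤ ‖∑' n : ℕ, g n‖ := by
    rw [Summable.tsum_eq_zero_add hgsum]
    have hg0 : g 0 = 1 := by
      rw [hgdef]; norm_num
    have htri := norm_sub_norm_le (g 0) (-(∑' n : ℕ, g (n+1)))
    rw [sub_neg_eq_add, norm_neg] at htri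
    rw [hg0] at htri ⊢
    simp only [norm_one] at htri
    linarith
  intro h0
  rw [hrep] at h0
  rcases mul_eq_zero.mp h0 with h | h
  · exact hx' h
  · rw [h] at hfinal
    simp only [norm_zero] at hfinal
    linarith

lemma jt2_fwd_base {τ : ℂ} (ht : 4/5 ≤ τ.im) (z : ℂ) (hz : jacobiTheta₂ z τ = 0) :
    ∃ k m : ℤ, z = (1 + τ)/2 + k + m * τ := by
  have hτ : 0 < τ.im := by linarith
  set m : ℤ := round ((z - (1+τ)/2).im / τ.im) with hmdef
  set k : ℤ := round ((z - (1+τ)/2).re - m * τ.re) with hkdef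
  set w : ℂ := z - (1+τ)/2 - k - m*τ with hwdef
  have hwim : w.im = ((z - (1+τ)/2).im / τ.im - m) * τ.im := by
    rw [hwdef]
    simp only [Complex.sub_im, Complex.intCast_im, Complex.mul_im, Complex.intCast_re]
    field_simp
    ring
  have him : |w.im| ≤ τ.im / 2 := by
    rw [hwim, abs_mul, abs_of_pos hτ]
    have h1 := abs_sub_round ((z - (1+τ)/2).im / τ.im)
    rw [hmdef]
    nlinarith [abs_nonneg ((z - (1+τ)/2).im / τ.im - (round ((z - (1+τ)/2).im / τ.im) : ℝ))]
  have hre : |w.re| ≤ 1/2 := by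
    have h2 := abs_sub_round ((z - (1+τ)/2).re - m * τ.re)
    have hwre : w.re = (z - (1+τ)/2).re - m * τ.re - k := by
      rw [hwdef]
      simp only [Complex.sub_re, Complex.intCast_re, Complex.mul_re, Complex.intCast_im]
      ring
    rw [hwre, hkdef]
    exact h2
  by_cases hw0 : w = 0
  · refine ⟨k, m, ?_⟩
    have : z = (1+τ)/2 + k + m*τ + w := by rw [hwdef]; ring
    rw [this, hw0, add_zero]
  · exfalso
    apply jt2_ne_zero_of_reduced ht hre him hw0
    have hzw : (1+τ)/2 + w + (k:ℂ) + (m:ℂ)*τ = z := by rw [hwdef]; ring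
    have hlat := jt2_add_lattice k m ((1+τ)/2 + w) τ
    rw [hzw, hz] at hlat
    exact (mul_eq_zero.mp hlat.symm).resolve_left (Complex.exp_ne_zero _)

lemma jt2_fwd (N : ℕ) : ∀ (τ : ℂ), 0 < τ.im → 4/5 ≤ τ.im * (10/9)^N →
    ∀ z : ℂ, jacobiTheta₂ z τ = 0 → ∃ k m : ℤ, z = (1 + τ)/2 + k + m * τ := by
  induction N with
  | zero =>
    intro τ hτ hbig z hz
    exact jt2_fwd_base (by simpa using hbig) z hz
  | succ N ih =>
    intro τ hτ hbig z hz
    rcases le_or_gt (4/5) τ.im with hge | hlt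
    · exact jt2_fwd_base hge z hz
    set a : ℤ := round τ.re with hadef
    set τ₁ : ℂ := τ - a with hτ₁def
    have hτ₁im : τ₁.im = τ.im := by
      rw [hτ₁def]; simp
    have hre1 : |τ₁.re| ≤ 1/2 := by
      have : τ₁.re = τ.re - a := by rw [hτ₁def]; simp
      rw [this, hadef]
      exact abs_sub_round τ.re
    have hτ₁0 : τ₁ ≠ 0 := by
      intro h0
      rw [← hτ₁im, h0] at hτ
      simp at hτ
    have hns_pos : 0 < Complex.normSq τ₁ := Complex.normSq_pos.mpr hτ₁0
    have hns : Complex.normSq τ₁ ≤ 89/100 := by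
      rw [Complex.normSq_apply]
      have h1 := abs_le.mp hre1
      have h2 : τ₁.im = τ.im := hτ₁im
      nlinarith [hτ.le, hlt]
    set τ₂ : ℂ := -1/τ₁ with hτ₂def
    have hτ₂im : τ₂.im = τ.im / Complex.normSq τ₁ := by
      rw [hτ₂def, neg_div, Complex.neg_im, one_div, Complex.inv_im, hτ₁im]
      field_simp
    have hτ₂pos : 0 < τ₂.im := by
      rw [hτ₂im]; positivity
    have hτ₂ge : (10/9) * τ.im ≤ τ₂.im := by
      rw [hτ₂im, le_div_iff₀ hns_pos]
      nlinarith
    have hbig' : 4/5 ≤ τ₂.im * (10/9)^N := by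
      have : τ.im * (10/9)^(N+1) = ((10/9) * τ.im) * (10/9)^N := by ring
      rw [this] at hbig
      have hp : (0:ℝ) < (10/9)^N := by positivity
      nlinarith
    -- transfer the zero
    have hz1 : jacobiTheta₂ (z + a/2) τ₁ = 0 := by
      have : τ = τ₁ + a := by rw [hτ₁def]; ring
      rw [this] at hz
      rw [← jt2_tau_add_int a z τ₁]
      exact hz
    have hFE := jacobiTheta₂_functional_equation (z + a/2) τ₁
    rw [hz1] at hFE
    have hC : (1 / (-I * τ₁) ^ (1/2 : ℂ) * Complex.exp (-π * I * (z + a/2)^2 / τ₁)) ≠ 0 := by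
      apply mul_ne_zero
      · rw [ne_eq, div_eq_zero_iff]
        push_neg
        refine ⟨one_ne_zero, ?_⟩
        rw [ne_eq, Complex.cpow_eq_zero_iff]
        push_neg
        intro hc
        exact absurd (mul_eq_zero.mp hc) (by push_neg; exact ⟨neg_ne_zero.mpr I_ne_zero, hτ₁0⟩)
      · exact Complex.exp_ne_zero _
    have hz2 : jacobiTheta₂ ((z + a/2)/τ₁) (-1/τ₁) = 0 := by
      rcases mul_eq_zero.mp hFE.symm with h | h
      · exact absurd h hC
      · exact h
    obtain ⟨kk, mm, hkm⟩ := ih τ₂ hτ₂pos hbig' _ hz2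
    -- solve for z
    have hτinv : (-1/τ₁) * τ₁ = -1 := by field_simp
    have h' : z + (a:ℂ)/2 = ((1 + τ₂)/2 + kk + mm * τ₂) * τ₁ := by
      rw [← hkm, div_mul_cancel₀ _ hτ₁0]
    rw [hτ₂def] at h'
    have h'' : z + (a:ℂ)/2 = τ₁/2 - 1/2 + kk*τ₁ - mm := by
      linear_combination h' + (1/2 + (mm:ℂ)) * hτinv
    refine ⟨-1 - a - mm - kk*a, kk, ?_⟩
    push_cast
    rw [hτ₁def] at h''
    linear_combination h''

lemma jt2_zero_iff {τ : ℂ} (hτ : 0 < τ.im) (z : ℂ) :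
    jacobiTheta₂ z τ = 0 ↔ ∃ k m : ℤ, z = (1 + τ)/2 + k + m * τ := by
  constructor
  · intro hz
    obtain ⟨N, hN⟩ := pow_unbounded_of_one_lt ((4/5)/τ.im) (by norm_num : (1:ℝ) < 10/9)
    refine jt2_fwd N τ hτ ?_ z hz
    rw [div_lt_iff₀ hτ] at hN
    nlinarith [pow_pos (by norm_num : (0:ℝ) < 10/9) N]
  · rintro ⟨k, m, rfl⟩
    rw [show (1 + τ)/2 + (k:ℂ) + (m:ℂ)*τ = (1 + τ)/2 + (k:ℂ) + (m:ℂ)*τ from rfl,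
      jt2_add_lattice k m ((1+τ)/2) τ, jt2_halfperiod, mul_zero]

lemma theta1_zero_iff {τ : ℂ} (hτ : 0 < τ.im) (z : ℂ) :
    theta1 z τ = 0 ↔ ∃ k m : ℤ, z = k + m * τ := by
  unfold theta1
  rw [mul_eq_zero]
  have h1 : (-I * Complex.exp (I * (Real.pi : ℂ) * τ / 4 + I * (Real.pi : ℂ) * z)) ≠ 0 :=
    mul_ne_zero (neg_ne_zero.mpr I_ne_zero) (Complex.exp_ne_zero _)
  simp only [h1, false_or]
  rw [jt2_zero_iff hτ]
  constructor
  · rintro ⟨k, m, hkm⟩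
    exact ⟨k, m, by linear_combination hkm⟩
  · rintro ⟨k, m, rfl⟩
    exact ⟨k, m, by ring⟩


end

/-- Location of the zeros of the squared Gauss map at 3-division points:
(i) the denominator θ₁(3z − τ; 3τ) does not vanish at z = k/3 + m·τ;
(ii) away from the poles, G²(z) = 0 iff z = k/3 + m·τ for some integers k, m. -/

theorem Gsq_zeros (τ : ℂ) (hτ : 0 < τ.im) :
    (∀ k m : ℤ, theta1 (3 * ((k : ℂ) / 3 + (m : ℂ) * τ) - τ) (3 * τ) ≠ 0) ∧
    (∀ z : ℂ, theta1 (3 * z - τ) (3 * τ) ≠ 0 →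
      (Gsq τ z = 0 ↔ ∃ k m : ℤ, z = (k : ℂ) / 3 + (m : ℂ) * τ)) := by
  have hσ : 0 < ((3 : ℂ) * τ).im := by
    have : ((3 : ℂ) * τ).im = 3 * τ.im := by
      simp [Complex.mul_im]
    rw [this]; linarith
  constructor
  · intro k m hzero
    rw [theta1_zero_iff hσ] at hzero
    obtain ⟨a, b, hab⟩ := hzero
    have hcast : ((k - a : ℤ) : ℂ) + ((3*m - 1 - 3*b : ℤ) : ℂ) * τ = 0 := by
      push_cast
      linear_combination hab
    have him := congrArg Complex.im hcast
    simp only [Complex.add_im, Complex.mul_im, Complex.intCast_im, Complex.intCast_re,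
      Complex.zero_im, zero_mul, add_zero, zero_add] at him
    have : ((3*m - 1 - 3*b : ℤ) : ℝ) = 0 := by
      rcases mul_eq_zero.mp him with h | h
      · exact h
      · exact absurd h (ne_of_gt hτ)
    have : (3*m - 1 - 3*b : ℤ) = 0 := by exact_mod_cast this
    omega
  · intro z hden
    unfold Gsq
    rw [div_eq_zero_iff]
    have hA : (-Complex.exp (I * (Real.pi : ℂ) * τ / 3) *
        Complex.exp (2 * (Real.pi : ℂ) * I * z)) ≠ 0 :=
      mul_ne_zero (neg_ne_zero.mpr (Complex.exp_ne_zero _)) (Complex.exp_ne_zero _)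
    constructor
    · rintro (h | h)
      · rcases mul_eq_zero.mp h with h' | h'
        · exact absurd h' hA
        · rw [theta1_zero_iff hσ] at h'
          obtain ⟨a, b, hab⟩ := h'
          exact ⟨a, b, by linear_combination hab / 3⟩
      · exact absurd h hden
    · rintro ⟨k, m, rfl⟩
      left
      rw [mul_eq_zero]
      right
      rw [theta1_zero_iff hσ]
      exact ⟨k, m, by ring⟩
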